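/- arXiv:1608.04319 — 4 statements merged into one kernel-verified Lean document; each statement's English description precedes it below -/
import Mathlib

section
/- Let G be a finite simple graph with n vertices and m edges. Then NK(T2(G)) = NK(G) · Π1*(G). -/
open Finset

variable {V : Type*}

/-- The Narumi–Katayama index: the product of the degrees of all vertices. -/
def NK {W : Type*} [Fintype W] (H : SimpleGraph W) [DecidableRel H.Adj] : ℕ :=
  ∏ v, H.degree v

/-- The first Zagreb index: the sum of the squares of the degrees. -/
def M1 [Fintype V] (G : SimpleGraph V) [DecidableRel G.Adj] : ℕ :=
  ∑ v, (G.degree v) ^ 2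

/-- The multiplicative sum Zagreb index: the product over the edges of `G` of the
sum of the degrees of the two endpoints. -/
def Pi1Star [Fintype V] [DecidableEq V] (G : SimpleGraph V) [DecidableRel G.Adj] : ℕ :=
  ∏ e ∈ G.edgeFinset,
    Sym2.lift ⟨fun u v => G.degree u + G.degree v, fun u v => by simp [Nat.add_comm]⟩ e

/-- A generic transformation graph on the vertex set `V(G) ∪ E(G)`, built from a
symmetric irreflexive relation `Rvv` between vertices, a symmetric irreflexive relation
`Ree` between edges, and an incidence relation `Rve` between vertices and edges. -/
def transGraph (G : SimpleGraph V) (Rvv : V → V → Prop) (Ree : Sym2 V → Sym2 V → Prop)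
    (Rve : V → Sym2 V → Prop)
    (hvv : Symmetric Rvv) (hvv' : Irreflexive Rvv)
    (hee : Symmetric Ree) (hee' : Irreflexive Ree) :
    SimpleGraph (V ⊕ G.edgeSet) where
  Adj a b :=
    match a, b with
    | Sum.inl u, Sum.inl v => Rvv u v
    | Sum.inr e, Sum.inr f => Ree e.1 f.1
    | Sum.inl u, Sum.inr e => Rve u e.1
    | Sum.inr e, Sum.inl u => Rve u e.1
  symm := ⟨by
    rintro (u | e) (v | f) h
    · exact hvv h
    · exact h
    · exact h
    · exact hee h⟩
  loopless := ⟨by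
    rintro (u | e) h
    · exact hvv' u h
    · exact hee' e.1 h⟩

instance transGraph.instDecidableAdj (G : SimpleGraph V) (Rvv : V → V → Prop)
    (Ree : Sym2 V → Sym2 V → Prop) (Rve : V → Sym2 V → Prop)
    (h1 : Symmetric Rvv) (h2 : Irreflexive Rvv) (h3 : Symmetric Ree) (h4 : Irreflexive Ree)
    [DecidableRel Rvv] [DecidableRel Ree] [∀ u e, Decidable (Rve u e)] :
    DecidableRel (transGraph G Rvv Ree Rve h1 h2 h3 h4).Adj := fun a b =>
  match a, b with
  | Sum.inl u, Sum.inl v => inferInstanceAs (Decidable (Rvv u v))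
  | Sum.inr e, Sum.inr f => inferInstanceAs (Decidable (Ree e.1 f.1))
  | Sum.inl u, Sum.inr e => inferInstanceAs (Decidable (Rve u e.1))
  | Sum.inr e, Sum.inl u => inferInstanceAs (Decidable (Rve u e.1))

/-- Two edges (as elements of `Sym2 V`) are adjacent: distinct and sharing an endpoint. -/
abbrev shareRel : Sym2 V → Sym2 V → Prop := fun e f => e ≠ f ∧ ∃ w, w ∈ e ∧ w ∈ f

lemma shareRel_symm : Symmetric (shareRel (V := V)) :=
  fun _ _ h => ⟨h.1.symm, h.2.imp fun _ hw => ⟨hw.2, hw.1⟩⟩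

lemma shareRel_irrefl : Irreflexive (shareRel (V := V)) := fun _ h => h.1 rfl

/-- Two edges are "non-adjacent": distinct and sharing no endpoint. -/
abbrev coshareRel : Sym2 V → Sym2 V → Prop := fun e f => e ≠ f ∧ ∀ w, w ∈ e → w ∉ f

lemma coshareRel_symm : Symmetric (coshareRel (V := V)) :=
  fun _ _ h => ⟨h.1.symm, fun w hf he => h.2 w he hf⟩

lemma coshareRel_irrefl : Irreflexive (coshareRel (V := V)) := fun _ h => h.1 rfl

/-- Non-adjacency of distinct vertices. -/
abbrev coAdj (G : SimpleGraph V) : V → V → Prop := fun u v => u ≠ v ∧ ¬ G.Adj u v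

lemma coAdj_symm (G : SimpleGraph V) : Symmetric (coAdj G) :=
  fun _ _ h => ⟨h.1.symm, fun ha => h.2 ha.symm⟩

lemma coAdj_irrefl (G : SimpleGraph V) : Irreflexive (coAdj G) := fun _ h => h.1 rfl

variable [Fintype V] [DecidableEq V]

/-- The semitotal-line graph `T₂(G)`: vertices never adjacent, edges adjacent iff they share an endpoint, a vertex adjacent to an edge iff incident. -/
abbrev T2 (G : SimpleGraph V) [DecidableRel G.Adj] : SimpleGraph (V ⊕ G.edgeSet) :=
  transGraph G (fun _ _ => False) shareRel (fun u e => u ∈ e)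
    (fun _ _ h => h.elim) (fun _ h => h) shareRel_symm shareRel_irrefl

instance T2.instDecidableAdj (G : SimpleGraph V) [DecidableRel G.Adj] : DecidableRel (T2 G).Adj :=
  transGraph.instDecidableAdj _ _ _ _ _ _ _ _


lemma T2_deg_inl (G : SimpleGraph V) [DecidableRel G.Adj] (u : V) :
    (T2 G).degree (Sum.inl u) = G.degree u := by
  rw [← SimpleGraph.card_incidenceSet_eq_degree G u, ← SimpleGraph.card_neighborSet_eq_degree]
  apply Fintype.card_congr
  refine
    { toFun := fun x =>
        match x with
        | ⟨Sum.inl v, hx⟩ => absurd hx (fun h => h.elim)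
        | ⟨Sum.inr e, hx⟩ => ⟨e.1, e.2, hx⟩
      invFun := fun e => ⟨Sum.inr ⟨e.1, e.2.1⟩, e.2.2⟩
      left_inv := ?_, right_inv := ?_ }
  · rintro ⟨(v | e), hx⟩
    · exact absurd hx (fun h => h.elim)
    · rfl
  · rintro ⟨e, he, hu⟩
    rfl

lemma T2_deg_inr (G : SimpleGraph V) [DecidableRel G.Adj] (e : G.edgeSet) :
    (T2 G).degree (Sum.inr e) =
      Sym2.lift ⟨fun u v => G.degree u + G.degree v, fun u v => by simp [Nat.add_comm]⟩ e.1 := by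
  obtain ⟨e, he⟩ := e
  induction e with
  | _ a b =>
  have hab : G.Adj a b := he
  have hne : a ≠ b := hab.ne
  rw [← SimpleGraph.card_neighborFinset_eq_degree, SimpleGraph.neighborFinset_eq_filter, Finset.card_filter]
  rw [Fintype.sum_sum_type]
  have h1 : (∑ u : V, if (T2 G).Adj (Sum.inr ⟨s(a,b), he⟩) (Sum.inl u) then 1 else 0) = 2 := by
    simp only [show ∀ u : V, (T2 G).Adj (Sum.inr ⟨s(a,b), he⟩) (Sum.inl u) ↔ u ∈ s(a,b) from
      fun _ => Iff.rfl]
    rw [Finset.sum_boole]; simp only [Nat.cast_id]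
    have : univ.filter (fun u : V => u ∈ s(a,b)) = {a, b} := by
      ext u; simp [Sym2.mem_iff]
    rw [this, Finset.card_insert_of_notMem (by simp [hne]), Finset.card_singleton]
  have h2 : (∑ f : G.edgeSet, if (T2 G).Adj (Sum.inr ⟨s(a,b), he⟩) (Sum.inr f) then 1 else 0)
      = G.degree a + G.degree b - 2 := by
    simp only [show ∀ f : G.edgeSet, (T2 G).Adj (Sum.inr ⟨s(a,b), he⟩) (Sum.inr f) ↔
        shareRel s(a,b) f.1 from fun _ => Iff.rfl]
    rw [show (∑ f : G.edgeSet, if shareRel s(a,b) f.1 then 1 else 0)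
        = ∑ f ∈ G.edgeFinset, if shareRel s(a,b) f then 1 else 0 from
      Finset.sum_set_coe (f := fun f => if shareRel s(a,b) f then 1 else 0) G.edgeSet]
    rw [Finset.sum_boole]; simp only [Nat.cast_id]
    have hfil : G.edgeFinset.filter (fun f => shareRel s(a,b) f)
        = ((G.incidenceFinset a ∪ G.incidenceFinset b).erase s(a,b)) := by
      ext f
      simp only [Finset.mem_filter, SimpleGraph.mem_edgeFinset, Finset.mem_erase,
        Finset.mem_union, SimpleGraph.mem_incidenceFinset, SimpleGraph.incidenceSet,
        Set.mem_setOf_eq, shareRel, Sym2.mem_iff, SimpleGraph.mem_edgeSet, ne_eq]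
      constructor
      · rintro ⟨hf, hne', w, (rfl | rfl), hw⟩
        · exact ⟨fun h => hne' h.symm, Or.inl ⟨hf, hw⟩⟩
        · exact ⟨fun h => hne' h.symm, Or.inr ⟨hf, hw⟩⟩
      · rintro ⟨hne', (⟨hf, hw⟩ | ⟨hf, hw⟩)⟩
        · exact ⟨hf, fun h => hne' h.symm, a, Or.inl rfl, hw⟩
        · exact ⟨hf, fun h => hne' h.symm, b, Or.inr rfl, hw⟩
    rw [hfil]
    have hmem : s(a,b) ∈ G.incidenceFinset a ∪ G.incidenceFinset b := by
      rw [Finset.mem_union, SimpleGraph.mem_incidenceFinset]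
      exact Or.inl ⟨he, Sym2.mem_mk_left a b⟩
    have hinter : G.incidenceFinset a ∩ G.incidenceFinset b = {s(a,b)} := by
      ext f
      simp only [Finset.mem_inter, SimpleGraph.mem_incidenceFinset, SimpleGraph.incidenceSet,
        Set.mem_setOf_eq, Finset.mem_singleton]
      constructor
      · rintro ⟨⟨hf, ha⟩, ⟨_, hb⟩⟩
        exact (Sym2.mem_and_mem_iff hne).mp ⟨ha, hb⟩
      · rintro rfl
        exact ⟨⟨he, Sym2.mem_mk_left a b⟩, ⟨he, Sym2.mem_mk_right a b⟩⟩
    have hcard := Finset.card_union_add_card_inter (G.incidenceFinset a) (G.incidenceFinset b)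
    rw [hinter, Finset.card_singleton, SimpleGraph.card_incidenceFinset_eq_degree,
      SimpleGraph.card_incidenceFinset_eq_degree] at hcard
    rw [Finset.card_erase_of_mem hmem]
    omega
  rw [h1, h2]
  have hd : 1 ≤ G.degree a := by
    rw [← SimpleGraph.card_neighborFinset_eq_degree]
    exact Finset.card_pos.mpr ⟨b, by simp [hab]⟩
  have hd' : 1 ≤ G.degree b := by
    rw [← SimpleGraph.card_neighborFinset_eq_degree]
    exact Finset.card_pos.mpr ⟨a, by simp [hab.symm]⟩
  simp only [Sym2.lift_mk]
  omega

theorem stmt_1 (G : SimpleGraph V) [DecidableRel G.Adj] :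
    NK (T2 G) = NK G * Pi1Star G := by
  rw [NK, Fintype.prod_sum_type]
  simp only [T2_deg_inl, T2_deg_inr]
  rw [NK, Pi1Star]
  congr 1
  exact Finset.prod_set_coe
    (f := fun e => Sym2.lift ⟨fun u v => G.degree u + G.degree v, fun u v => by
      simp [Nat.add_comm]⟩ e) G.edgeSet
end

section
/- Let G be a finite simple graph with n ≥ 2 vertices and m edges. Then NK(G^{+-}) = m^n · (n-2)^m. -/
open Finset

variable {V : Type*}

variable [Fintype V] [DecidableEq V]

/-- The transformation graph `G^{+-}`. -/
abbrev Gpm (G : SimpleGraph V) [DecidableRel G.Adj] : SimpleGraph (V ⊕ G.edgeSet) :=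
  transGraph G G.Adj (fun _ _ => False) (fun u e => u ∉ e)
    (fun _ _ h => G.adj_symm h) (fun _ h => G.irrefl h) (fun _ _ h => h.elim) (fun _ h => h)

instance Gpm.instDecidableAdj (G : SimpleGraph V) [DecidableRel G.Adj] :
    DecidableRel (Gpm G).Adj :=
  transGraph.instDecidableAdj _ _ _ _ _ _ _ _


lemma deg_inl (G : SimpleGraph V) [DecidableRel G.Adj] (u : V) :
    (Gpm G).degree (Sum.inl u) = G.edgeFinset.card := by
  classical
  rw [← SimpleGraph.card_neighborSet_eq_degree]
  have h1 : Fintype.card ((Gpm G).neighborSet (Sum.inl u)) =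
      Fintype.card {v : V // G.Adj u v} + Fintype.card {e : G.edgeSet // u ∉ e.1} := by
    exact (Fintype.card_congr ((Equiv.subtypeEquivRight (fun x => Iff.rfl)).trans
      Equiv.subtypeSum)).trans Fintype.card_sum
  have h2 : Fintype.card {v : V // G.Adj u v} = G.degree u := by
    rw [← SimpleGraph.card_neighborSet_eq_degree]; rfl
  have h3 : Fintype.card {e : G.edgeSet // u ∈ e.1} = G.degree u := by
    rw [← SimpleGraph.card_incidenceSet_eq_degree (G := G) (v := u)]
    exact Fintype.card_congr
      ⟨fun e => ⟨e.1.1, e.1.2, e.2⟩, fun e => ⟨⟨e.1, e.2.1⟩, e.2.2⟩,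
        fun e => rfl, fun e => rfl⟩
  have h4 : Fintype.card {e : G.edgeSet // u ∉ e.1} =
      Fintype.card G.edgeSet - G.degree u := by
    rw [Fintype.card_subtype_compl, h3]
  have hle : G.degree u ≤ Fintype.card G.edgeSet := h3 ▸ Fintype.card_subtype_le _
  have hm : Fintype.card G.edgeSet = G.edgeFinset.card := by
    rw [SimpleGraph.edgeFinset, Set.toFinset_card]
  omega

lemma deg_inr (G : SimpleGraph V) [DecidableRel G.Adj] (e : G.edgeSet) :
    (Gpm G).degree (Sum.inr e) = Fintype.card V - 2 := by
  classical
  rw [← SimpleGraph.card_neighborSet_eq_degree]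
  have h1 : Fintype.card ((Gpm G).neighborSet (Sum.inr e)) =
      Fintype.card {u : V // u ∉ e.1} + Fintype.card {f : G.edgeSet // False} := by
    exact (Fintype.card_congr ((Equiv.subtypeEquivRight (fun x => Iff.rfl)).trans
      Equiv.subtypeSum)).trans Fintype.card_sum
  have h0 : Fintype.card {f : G.edgeSet // False} = 0 := by simp
  have h2 : Fintype.card {u : V // u ∈ e.1} = 2 := by
    obtain ⟨e, he⟩ := e
    induction e with
    | _ a b =>
      have hab : a ≠ b := G.ne_of_adj he
      rw [Fintype.card_subtype]
      have : Finset.univ.filter (fun u => u ∈ s(a, b)) = {a, b} := by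
        ext u; simp [Sym2.mem_iff]
      rw [this, Finset.card_insert_of_notMem (by simpa using hab), Finset.card_singleton]
  have h4 : Fintype.card {u : V // u ∉ e.1} = Fintype.card V - 2 := by
    rw [Fintype.card_subtype_compl, h2]
  omega

theorem stmt_2 (G : SimpleGraph V) [DecidableRel G.Adj]
    (hn : 2 ≤ Fintype.card V) :
    NK (Gpm G) = G.edgeFinset.card ^ Fintype.card V * (Fintype.card V - 2) ^ G.edgeFinset.card := by
  classical
  have hm : Fintype.card G.edgeSet = G.edgeFinset.card := by
    rw [SimpleGraph.edgeFinset, Set.toFinset_card]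
  rw [NK, Fintype.prod_sum_type]
  simp only [deg_inl, deg_inr, Finset.prod_const, Finset.card_univ, hm]
end

section
/- Let G be an r-regular finite simple graph with n vertices and m edges. Then NK(G^{++-}) = m^n · (2r+n-4)^m. -/
open Finset

variable {V : Type*}

variable [Fintype V] [DecidableEq V]

/-- The total transformation graph `G^{++-}`. -/
abbrev Gppm (G : SimpleGraph V) [DecidableRel G.Adj] : SimpleGraph (V ⊕ G.edgeSet) :=
  transGraph G G.Adj shareRel (fun u e => u ∉ e)
    (fun _ _ h => h.symm) (fun _ h => h.ne rfl) shareRel_symm shareRel_irrefl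

instance Gppm.instDecidableAdj (G : SimpleGraph V) [DecidableRel G.Adj] :
    DecidableRel (Gppm G).Adj :=
  transGraph.instDecidableAdj _ _ _ _ _ _ _ _

lemma card_subtype_subtype {α : Type*} [Fintype α] [DecidableEq α] (p q : α → Prop)
    [DecidablePred p] [DecidablePred q] :
    Fintype.card {x : {a // p a} // q x.1} = ((Finset.univ.filter p).filter q).card := by
  rw [Fintype.card_congr (Equiv.subtypeSubtypeEquivSubtypeInter p q), Fintype.card_subtype]
  congr 1
  ext a
  simp [and_comm]

theorem stmt_10 (G : SimpleGraph V) [DecidableRel G.Adj]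
    (r : ℕ)
    (hreg : G.IsRegularOfDegree r) :
    NK (Gppm G) = G.edgeFinset.card ^ Fintype.card V * (2 * r + Fintype.card V - 4) ^ G.edgeFinset.card := by
  classical
  set m := G.edgeFinset.card with hm
  set n := Fintype.card V with hn
  have hEcard : Fintype.card G.edgeSet = m := by
    rw [hm, SimpleGraph.edgeFinset, Set.toFinset_card]
  have key : ∀ x : V ⊕ G.edgeSet, (Gppm G).degree x =
      Fintype.card {a // (Gppm G).Adj x (Sum.inl a)} +
      Fintype.card {b // (Gppm G).Adj x (Sum.inr b)} := by
    intro x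
    rw [← SimpleGraph.card_neighborSet_eq_degree]
    calc Fintype.card ((Gppm G).neighborSet x)
        = Fintype.card ({a // (Gppm G).Adj x (Sum.inl a)} ⊕ {b // (Gppm G).Adj x (Sum.inr b)}) :=
          Fintype.card_congr Equiv.subtypeSum
      _ = _ := Fintype.card_sum
  -- degree of a vertex
  have hdeg1 : ∀ u : V, (Gppm G).degree (Sum.inl u) = m := by
    intro u
    rw [key]
    have h1 : Fintype.card {a // (Gppm G).Adj (Sum.inl u) (Sum.inl a)} = r := by
      have : Fintype.card {a // G.Adj u a} = G.degree u := by
        rw [Fintype.card_subtype, SimpleGraph.degree, SimpleGraph.neighborFinset_eq_filter]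
      rw [show Fintype.card {a // (Gppm G).Adj (Sum.inl u) (Sum.inl a)}
          = Fintype.card {a // G.Adj u a} from rfl, this, hreg u]
    have h2 : Fintype.card {b : G.edgeSet // (Gppm G).Adj (Sum.inl u) (Sum.inr b)} = m - r := by
      have : Fintype.card {b : G.edgeSet // (Gppm G).Adj (Sum.inl u) (Sum.inr b)}
          = (G.edgeFinset.filter (fun e => u ∉ e)).card := by
        have e2 : Fintype.card {b : G.edgeSet // (Gppm G).Adj (Sum.inl u) (Sum.inr b)}
            = Fintype.card {x : Sym2 V // x ∈ G.edgeSet ∧ u ∉ x} :=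
          Fintype.card_congr
            (Equiv.subtypeSubtypeEquivSubtypeInter (· ∈ G.edgeSet) (fun x => u ∉ x))
        rw [e2, Fintype.card_subtype]
        congr 1
        ext e
        simp [SimpleGraph.mem_edgeFinset]
      rw [this]
      have hsplit := Finset.card_filter_add_card_filter_not
        (s := G.edgeFinset) (p := fun e => u ∈ e)
      have hinc : (G.edgeFinset.filter (fun e => u ∈ e)).card = r := by
        rw [← SimpleGraph.incidenceFinset_eq_filter, SimpleGraph.card_incidenceFinset_eq_degree,
          hreg u]
      have : (G.edgeFinset.filter (fun e => ¬ u ∈ e)).card = m - r := by omega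
      convert this using 2
    rw [h1, h2]
    have hr_le : r ≤ m := by
      have := Finset.card_filter_le G.edgeFinset (fun e => u ∈ e)
      rw [← SimpleGraph.incidenceFinset_eq_filter, SimpleGraph.card_incidenceFinset_eq_degree,
        hreg u] at this
      omega
    omega
  -- degree of an edge
  have hdeg2 : ∀ e : G.edgeSet, (Gppm G).degree (Sum.inr e) = 2 * r + n - 4 := by
    rintro ⟨e, he⟩
    induction e with
    | _ a b =>
    have hab : G.Adj a b := he
    have hne : a ≠ b := hab.ne
    have hr1 : 1 ≤ r := by
      have : 0 < G.degree a := by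
        rw [← SimpleGraph.card_neighborFinset_eq_degree]
        exact Finset.card_pos.2 ⟨b, by simp [hab]⟩
      rw [hreg a] at this; omega
    have hn2 : 2 ≤ n := by
      have : Nontrivial V := ⟨a, b, hne⟩
      rw [hn]; exact Fintype.one_lt_card
    rw [key]
    have h1 : Fintype.card {v // (Gppm G).Adj (Sum.inr ⟨s(a,b), he⟩) (Sum.inl v)} = n - 2 := by
      rw [show Fintype.card {v // (Gppm G).Adj (Sum.inr ⟨s(a,b), he⟩) (Sum.inl v)}
          = Fintype.card {v // v ∉ s(a,b)} from rfl, Fintype.card_subtype]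
      have hsplit := Finset.card_filter_add_card_filter_not
        (s := (Finset.univ : Finset V)) (p := fun v => v ∈ s(a,b))
      have h2 : (Finset.univ.filter (fun v => v ∈ s(a,b))).card = 2 := by
        have : Finset.univ.filter (fun v => v ∈ s(a,b)) = {a, b} := by
          ext v; simp [Sym2.mem_iff]
        rw [this, Finset.card_insert_of_notMem (by simp [hne]), Finset.card_singleton]
      have : (Finset.univ.filter (fun v => ¬ v ∈ s(a,b))).card = n - 2 := by
        rw [Finset.card_univ, ← hn] at hsplit; omega
      convert this using 2
    have h2 : Fintype.card {f : G.edgeSet // (Gppm G).Adj (Sum.inr ⟨s(a,b), he⟩) (Sum.inr f)}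
        = 2 * r - 2 := by
      have e2 : Fintype.card {f : G.edgeSet // (Gppm G).Adj (Sum.inr ⟨s(a,b), he⟩) (Sum.inr f)}
          = Fintype.card {x : Sym2 V // x ∈ G.edgeSet ∧ shareRel s(a,b) x} :=
        Fintype.card_congr
          (Equiv.subtypeSubtypeEquivSubtypeInter (· ∈ G.edgeSet) (shareRel s(a,b)))
      rw [e2, Fintype.card_subtype]
      have hfe : (Finset.univ.filter (fun x : Sym2 V => x ∈ G.edgeSet ∧ shareRel s(a,b) x))
          = G.edgeFinset.filter (fun f => shareRel s(a,b) f) := by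
        ext e; simp [SimpleGraph.mem_edgeFinset]
      rw [hfe]
      have hfilter : G.edgeFinset.filter (fun f => shareRel s(a,b) f)
          = (G.edgeFinset.filter (fun f => a ∈ f ∨ b ∈ f)).erase s(a,b) := by
        ext f
        simp only [Finset.mem_filter, Finset.mem_erase, shareRel]
        constructor
        · rintro ⟨hf, hne', w, hw1, hw2⟩
          refine ⟨fun h => hne' h.symm, hf, ?_⟩
          rcases Sym2.mem_iff.1 hw1 with rfl | rfl
          · exact Or.inl hw2
          · exact Or.inr hw2
        · rintro ⟨hne', hf, h | h⟩
          · exact ⟨hf, fun h' => hne' h'.symm, a, by simp, h⟩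
          · exact ⟨hf, fun h' => hne' h'.symm, b, by simp, h⟩
      rw [hfilter]
      have hunion : G.edgeFinset.filter (fun f => a ∈ f ∨ b ∈ f)
          = G.incidenceFinset a ∪ G.incidenceFinset b := by
        ext f
        simp [SimpleGraph.incidenceFinset_eq_filter, Finset.mem_union, Finset.mem_filter,
          and_or_left]
      have hinter : G.incidenceFinset a ∩ G.incidenceFinset b = {s(a,b)} := by
        ext f
        simp only [Finset.mem_inter, SimpleGraph.incidenceFinset_eq_filter, Finset.mem_filter,
          Finset.mem_singleton]
        constructor
        · rintro ⟨⟨hf, ha⟩, _, hb⟩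
          exact (Sym2.mem_and_mem_iff hne).1 ⟨ha, hb⟩
        · rintro rfl
          simp [SimpleGraph.mem_edgeFinset, hab]
      have hcard := Finset.card_union_add_card_inter (G.incidenceFinset a) (G.incidenceFinset b)
      rw [hinter, Finset.card_singleton, SimpleGraph.card_incidenceFinset_eq_degree,
        SimpleGraph.card_incidenceFinset_eq_degree, hreg a, hreg b] at hcard
      have hmem : s(a,b) ∈ G.incidenceFinset a ∪ G.incidenceFinset b := by
        simp [SimpleGraph.incidenceFinset_eq_filter, SimpleGraph.mem_edgeFinset, hab]
      rw [hunion, Finset.card_erase_of_mem hmem]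
      omega
    rw [h1, h2]
    omega
  -- put it together
  rw [NK, Fintype.prod_sum_type]
  have p1 : (∏ v : V, (Gppm G).degree (Sum.inl v)) = m ^ n := by
    rw [Finset.prod_congr rfl (fun v _ => hdeg1 v), Finset.prod_const, Finset.card_univ]
  have p2 : (∏ e : G.edgeSet, (Gppm G).degree (Sum.inr e)) = (2 * r + n - 4) ^ m := by
    rw [Finset.prod_congr rfl (fun e _ => hdeg2 e), Finset.prod_const, Finset.card_univ, hEcard]
  rw [p1, p2]
end

section
/- Let G be a finite simple graph with n ≥ 1 vertices and m ≥ 1 edges. Then, as real numbers, NK(G^{-+-}) ≤ ((m+n-1) - 4m/n)^n · ((n-4) + M1(G)/m)^m, with equality if and only if G is regular. -/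
open Finset

variable {V : Type*}

variable [Fintype V] [DecidableEq V]

/-- The total transformation graph `G^{-+-}`. -/
abbrev Gmpm (G : SimpleGraph V) [DecidableRel G.Adj] : SimpleGraph (V ⊕ G.edgeSet) :=
  transGraph G (coAdj G) shareRel (fun u e => u ∉ e)
    (coAdj_symm G) (coAdj_irrefl G) shareRel_symm shareRel_irrefl


lemma amgm {ι : Type*} (s : Finset ι) (hs : s.Nonempty) (f : ι → ℝ)
    (hf : ∀ i ∈ s, 0 ≤ f i) :
    (∏ i ∈ s, f i ≤ ((∑ i ∈ s, f i) / s.card) ^ s.card) ∧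
    ((∏ i ∈ s, f i = ((∑ i ∈ s, f i) / s.card) ^ s.card) ↔
      ∀ i ∈ s, f i = (∑ i ∈ s, f i) / s.card) := by
  have hN : 0 < (s.card : ℝ) := by exact_mod_cast Finset.card_pos.2 hs
  have hNne : (s.card : ℝ) ≠ 0 := hN.ne'
  set A : ℝ := (∑ i ∈ s, f i) / s.card with hA
  have hsumnn : 0 ≤ ∑ i ∈ s, f i := Finset.sum_nonneg hf
  have hAnn : 0 ≤ A := div_nonneg hsumnn hN.le
  by_cases h0 : ∃ i ∈ s, f i = 0
  · obtain ⟨i0, hi0, hfi0⟩ := h0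
    have hprod : ∏ i ∈ s, f i = 0 := Finset.prod_eq_zero hi0 hfi0
    constructor
    · rw [hprod]; positivity
    · constructor
      · intro h
        have hA0 : A = 0 := by
          have := h.symm.trans hprod
          exact pow_eq_zero_iff (Finset.card_pos.2 hs).ne' |>.1 this
        have hsum0 : ∑ i ∈ s, f i = 0 := by
          rw [hA, div_eq_zero_iff] at hA0; exact hA0.resolve_right hNne
        intro i hi
        rw [hA0, (Finset.sum_eq_zero_iff_of_nonneg hf).1 hsum0 i hi]
      · intro h
        have hA0 : A = 0 := (h i0 hi0) ▸ hfi0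
        rw [hprod, hA0, zero_pow (Finset.card_pos.2 hs).ne']
  · push_neg at h0
    have hpos : ∀ i ∈ s, 0 < f i := fun i hi => (hf i hi).lt_of_ne' (h0 i hi)
    by_cases hc : ∃ j ∈ s, ∃ k ∈ s, f j ≠ f k
    · -- strict inequality
      have hApos : 0 < A := by
        obtain ⟨j, hj, _⟩ := hc
        exact div_pos (Finset.sum_pos hpos ⟨j, hj⟩) hN
      have hjensen := strictConcaveOn_log_Ioi.lt_map_sum
        (t := s) (w := fun _ => (s.card : ℝ)⁻¹) (p := f)
        (fun i _ => by positivity)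
        (by simp [Finset.sum_const, hNne])
        (fun i hi => Set.mem_Ioi.2 (hpos i hi)) hc
      simp only [smul_eq_mul] at hjensen
      have hsum_eq : ∑ i ∈ s, (s.card : ℝ)⁻¹ * f i = A := by
        rw [← Finset.mul_sum, hA]; ring
      rw [hsum_eq] at hjensen
      have hlt : ∏ i ∈ s, f i < A ^ s.card := by
        have h1 : ∏ i ∈ s, f i = Real.exp (∑ i ∈ s, Real.log (f i)) := by
          rw [Real.exp_sum]
          exact (Finset.prod_congr rfl fun i hi => (Real.exp_log (hpos i hi)).symm)
        have h2 : ∑ i ∈ s, Real.log (f i) < s.card * Real.log A := by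
          have := mul_lt_mul_of_pos_left hjensen hN
          rw [Finset.mul_sum] at this
          calc ∑ i ∈ s, Real.log (f i)
              = ∑ i ∈ s, (s.card : ℝ) * ((s.card : ℝ)⁻¹ * Real.log (f i)) := by
                refine Finset.sum_congr rfl fun i hi => ?_
                field_simp
            _ < (s.card : ℝ) * Real.log A := this
        calc ∏ i ∈ s, f i = Real.exp (∑ i ∈ s, Real.log (f i)) := h1
          _ < Real.exp ((s.card : ℝ) * Real.log A) := Real.exp_lt_exp.2 h2
          _ = A ^ s.card := by
              rw [mul_comm, Real.exp_mul, Real.exp_log hApos, Real.rpow_natCast]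
      refine ⟨hlt.le, ?_, ?_⟩
      · intro h; exact absurd h hlt.ne
      · intro h
        obtain ⟨j, hj, k, hk, hne⟩ := hc
        exact absurd ((h j hj).trans (h k hk).symm) hne
    · push_neg at hc
      obtain ⟨j0, hj0⟩ := hs
      have hconst : ∀ i ∈ s, f i = f j0 := fun i hi => hc i hi j0 hj0
      have hsum : ∑ i ∈ s, f i = s.card * f j0 := by
        rw [Finset.sum_congr rfl hconst, Finset.sum_const, nsmul_eq_mul]
      have hAeq : A = f j0 := by rw [hA, hsum]; field_simp
      have hprod : ∏ i ∈ s, f i = A ^ s.card := by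
        rw [Finset.prod_congr rfl hconst, Finset.prod_const, hAeq]
      refine ⟨hprod.le, fun _ i hi => (hconst i hi).trans hAeq.symm, fun _ => hprod⟩

set_option linter.unusedSectionVars false
section DegLemmas
variable {V : Type*} [Fintype V] [DecidableEq V] (G : SimpleGraph V) [DecidableRel G.Adj]

lemma card_split (p : V ⊕ G.edgeSet → Prop) [DecidablePred p] :
    Fintype.card {c // p c} =
      Fintype.card {a : V // p (Sum.inl a)} + Fintype.card {b : G.edgeSet // p (Sum.inr b)} := by
  rw [Fintype.card_congr (Equiv.subtypeSum (p := p)), Fintype.card_sum]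

lemma card_coAdj (u : V) :
    Fintype.card {v : V // coAdj G u v} + (1 + G.degree u) = Fintype.card V := by
  classical
  rw [Fintype.card_subtype]
  have h2 : (Finset.univ.filter fun v => ¬ (u = v ∨ G.Adj u v)) =
      Finset.univ.filter fun v => coAdj G u v := by
    apply Finset.filter_congr
    intro v _
    simp only [coAdj, not_or, ne_eq, eq_iff_iff, eq_comm]
  have h3 : (Finset.univ.filter fun v => u = v ∨ G.Adj u v) =
      insert u (G.neighborFinset u) := by
    ext v
    simp [eq_comm, SimpleGraph.mem_neighborFinset]
  have h4 := Finset.card_filter_add_card_filter_not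
    (s := (Finset.univ : Finset V)) (p := fun v => u = v ∨ G.Adj u v)
  rw [h2, h3, Finset.card_insert_of_notMem (by simp),
    G.card_neighborFinset_eq_degree, Finset.card_univ] at h4
  omega
end DegLemmas

section DegLemmas2
variable {V : Type*} [Fintype V] [DecidableEq V] (G : SimpleGraph V) [DecidableRel G.Adj]

lemma card_nonincident (u : V) :
    Fintype.card {e : G.edgeSet // u ∉ e.1} + G.degree u = G.edgeFinset.card := by
  classical
  have e1 : {e : G.edgeSet // u ∉ e.1} ≃ {e : Sym2 V // e ∈ G.edgeSet ∧ u ∉ e} :=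
    Equiv.subtypeSubtypeEquivSubtypeInter (fun e => e ∈ G.edgeSet) (fun e => u ∉ e)
  have h1 : Fintype.card {e : G.edgeSet // u ∉ e.1}
      = (G.edgeFinset.filter fun e => u ∉ e).card := by
    refine (Fintype.card_congr e1).trans ?_
    rw [Fintype.card_subtype]
    congr 1
    ext e
    simp [and_comm]
  have h2 : (G.edgeFinset.filter fun e => u ∈ e).card = G.degree u := by
    rw [← SimpleGraph.incidenceFinset_eq_filter, SimpleGraph.card_incidenceFinset_eq_degree]
  have h3 := Finset.card_filter_add_card_filter_not
    (s := G.edgeFinset) (p := fun e => u ∈ e)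
  rw [h1]
  omega

lemma degree_inl (G : SimpleGraph V) [DecidableRel G.Adj] (u : V) :
    (Gmpm G).degree (Sum.inl u) + 1 + 2 * G.degree u = Fintype.card V + G.edgeFinset.card := by
  have hdeg : (Gmpm G).degree (Sum.inl u)
      = Fintype.card {v : V // coAdj G u v} + Fintype.card {e : G.edgeSet // u ∉ e.1} := by
    rw [← SimpleGraph.card_neighborSet_eq_degree]
    have e1 : ((Gmpm G).neighborSet (Sum.inl u)) ≃
        {v : V // coAdj G u v} ⊕ {e : G.edgeSet // u ∉ e.1} :=
      (Equiv.subtypeEquivRight (fun c => Iff.rfl)).trans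
        (Equiv.subtypeSum (p := fun c => (Gmpm G).Adj (Sum.inl u) c))
    exact (Fintype.card_congr e1).trans Fintype.card_sum
  have h1 := card_coAdj G u
  have h2 := card_nonincident G u
  omega
end DegLemmas2

section DegLemmas3
variable {V : Type*} [Fintype V] [DecidableEq V] (G : SimpleGraph V) [DecidableRel G.Adj]

lemma card_notmem_edge (a b : V) (hab : a ≠ b) :
    Fintype.card {v : V // v ∉ s(a, b)} + 2 = Fintype.card V := by
  classical
  have h3 := Finset.card_filter_add_card_filter_not
    (s := (Finset.univ : Finset V)) (p := fun v => v ∈ s(a, b))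
  have h1 : (Finset.univ.filter fun v => v ∈ s(a, b)) = {a, b} := by
    ext v; simp [Sym2.mem_iff]
  rw [h1, Finset.card_pair hab, Finset.card_univ] at h3
  rw [Fintype.card_subtype]
  omega

lemma card_share (a b : V) (hab : G.Adj a b) :
    Fintype.card {f : G.edgeSet // shareRel s(a, b) f.1} + 2 = G.degree a + G.degree b := by
  classical
  have e1 : {f : G.edgeSet // shareRel s(a, b) f.1} ≃
      {f : Sym2 V // f ∈ G.edgeSet ∧ shareRel s(a, b) f} :=
    Equiv.subtypeSubtypeEquivSubtypeInter (fun f => f ∈ G.edgeSet) (fun f => shareRel s(a, b) f)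
  have h1 : Fintype.card {f : G.edgeSet // shareRel s(a, b) f.1}
      = (G.edgeFinset.filter fun f => shareRel s(a, b) f).card := by
    refine (Fintype.card_congr e1).trans ?_
    rw [Fintype.card_subtype]
    congr 1
    ext f
    simp [and_comm]
  have hA : G.incidenceFinset a = G.edgeFinset.filter fun f => a ∈ f :=
    SimpleGraph.incidenceFinset_eq_filter G a
  have hB : G.incidenceFinset b = G.edgeFinset.filter fun f => b ∈ f :=
    SimpleGraph.incidenceFinset_eq_filter G b
  have hmemA : s(a, b) ∈ G.incidenceFinset a := by
    rw [hA]; simp [SimpleGraph.mem_edgeFinset, hab]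
  have h2 : (G.edgeFinset.filter fun f => shareRel s(a, b) f)
      = (G.incidenceFinset a ∪ G.incidenceFinset b).erase s(a, b) := by
    ext f
    simp only [Finset.mem_filter, Finset.mem_erase, Finset.mem_union, hA, hB, shareRel,
      Sym2.mem_iff, ne_eq]
    constructor
    · rintro ⟨hf, hne, w, (rfl | rfl), hw⟩
      · exact ⟨fun h => hne h.symm, Or.inl ⟨hf, hw⟩⟩
      · exact ⟨fun h => hne h.symm, Or.inr ⟨hf, hw⟩⟩
    · rintro ⟨hne, (⟨hf, hw⟩ | ⟨hf, hw⟩)⟩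
      · exact ⟨hf, fun h => hne h.symm, a, Or.inl rfl, hw⟩
      · exact ⟨hf, fun h => hne h.symm, b, Or.inr rfl, hw⟩
  have hinter : G.incidenceFinset a ∩ G.incidenceFinset b = {s(a, b)} := by
    ext f
    simp only [Finset.mem_inter, hA, hB, Finset.mem_filter, Finset.mem_singleton]
    constructor
    · rintro ⟨⟨hf, ha⟩, _, hb⟩
      exact (Sym2.mem_and_mem_iff hab.ne).1 ⟨ha, hb⟩
    · rintro rfl
      simp [SimpleGraph.mem_edgeFinset, hab]
  have hcard := Finset.card_union_add_card_inter (G.incidenceFinset a) (G.incidenceFinset b)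
  rw [hinter, Finset.card_singleton, SimpleGraph.card_incidenceFinset_eq_degree,
    SimpleGraph.card_incidenceFinset_eq_degree] at hcard
  have hmemU : s(a, b) ∈ G.incidenceFinset a ∪ G.incidenceFinset b :=
    Finset.mem_union_left _ hmemA
  have herase := Finset.card_erase_of_mem hmemU
  have hUpos : 1 ≤ (G.incidenceFinset a ∪ G.incidenceFinset b).card :=
    Finset.card_pos.2 ⟨_, hmemU⟩
  rw [h1, h2]
  omega

lemma degree_inr (a b : V) (hab : G.Adj a b) :
    (Gmpm G).degree (Sum.inr ⟨s(a, b), hab⟩) + 4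
      = Fintype.card V + (G.degree a + G.degree b) := by
  have hdeg : (Gmpm G).degree (Sum.inr ⟨s(a, b), hab⟩)
      = Fintype.card {v : V // v ∉ s(a, b)}
        + Fintype.card {f : G.edgeSet // shareRel s(a, b) f.1} := by
    rw [← SimpleGraph.card_neighborSet_eq_degree]
    have e1 : ((Gmpm G).neighborSet (Sum.inr ⟨s(a, b), hab⟩)) ≃
        {v : V // v ∉ s(a, b)} ⊕ {f : G.edgeSet // shareRel s(a, b) f.1} :=
      (Equiv.subtypeEquivRight (fun c => Iff.rfl)).trans
        (Equiv.subtypeSum (p := fun c => (Gmpm G).Adj (Sum.inr ⟨s(a, b), hab⟩) c))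
    exact (Fintype.card_congr e1).trans Fintype.card_sum
  have h1 := card_notmem_edge (V := V) a b hab.ne
  have h2 := card_share G a b hab
  omega
end DegLemmas3

section SumLemmas
variable {V : Type*} [Fintype V] [DecidableEq V] (G : SimpleGraph V) [DecidableRel G.Adj]

/-- Degree sum across an edge. -/
def degSum : Sym2 V → ℕ :=
  Sym2.lift ⟨fun u v => G.degree u + G.degree v, fun u v => by simp [Nat.add_comm]⟩

lemma degSum_mk (a b : V) : degSum G s(a, b) = G.degree a + G.degree b := rfl

lemma sum_degSum : ∑ e ∈ G.edgeFinset, degSum G e = M1 G := by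
  classical
  have key : ∀ e ∈ G.edgeFinset, degSum G e
      = ∑ v ∈ Finset.univ.filter (· ∈ e), G.degree v := by
    intro e he
    induction e using Sym2.ind with
    | _ a b =>
      have hab : G.Adj a b := by
        simpa [SimpleGraph.mem_edgeFinset, SimpleGraph.mem_edgeSet] using he
      have hfil : (Finset.univ.filter (· ∈ s(a, b))) = {a, b} := by
        ext v; simp [Sym2.mem_iff]
      rw [hfil, degSum_mk, Finset.sum_pair hab.ne]
  rw [Finset.sum_congr rfl key]
  simp only [Finset.sum_filter]
  rw [Finset.sum_comm]
  unfold M1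
  refine Finset.sum_congr rfl fun v _ => ?_
  rw [← Finset.sum_filter, Finset.sum_const, ← SimpleGraph.incidenceFinset_eq_filter,
    SimpleGraph.card_incidenceFinset_eq_degree, smul_eq_mul, sq]

lemma degree_inl_real (u : V) :
    ((Gmpm G).degree (Sum.inl u) : ℝ)
      = (G.edgeFinset.card : ℝ) + Fintype.card V - 1 - 2 * G.degree u := by
  have h := congrArg (Nat.cast : ℕ → ℝ) (degree_inl G u)
  push_cast at h
  linarith

lemma degree_inr_real (e : G.edgeSet) :
    ((Gmpm G).degree (Sum.inr e) : ℝ)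
      = (Fintype.card V : ℝ) - 4 + degSum G e.1 := by
  obtain ⟨e, he⟩ := e
  induction e using Sym2.ind with
  | _ a b =>
    have hab : G.Adj a b := he
    have h := congrArg (Nat.cast : ℕ → ℝ) (degree_inr G a b hab)
    rw [degSum_mk]
    push_cast at h ⊢
    linarith

lemma NK_split :
    (NK (Gmpm G) : ℝ) = (∏ u : V, ((Gmpm G).degree (Sum.inl u) : ℝ))
      * ∏ e ∈ G.edgeFinset, ((Fintype.card V : ℝ) - 4 + degSum G e) := by
  rw [NK, Fintype.prod_sum_type]
  push_cast
  congr 1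
  rw [show (fun e : G.edgeSet => ((Gmpm G).degree (Sum.inr e) : ℝ))
      = fun e : G.edgeSet => ((Fintype.card V : ℝ) - 4 + degSum G e.1) from
    funext fun e => degree_inr_real G e]
  exact Finset.prod_set_coe (f := fun e => (Fintype.card V : ℝ) - 4 + degSum G e) G.edgeSet

end SumLemmas


section Helpers
variable {V : Type*} [Fintype V] [DecidableEq V] (G : SimpleGraph V) [DecidableRel G.Adj]

lemma regular_of_degree_eq (hne : Nonempty V) (h : ∀ u v : V, G.degree u = G.degree v) :
    ∃ r, G.IsRegularOfDegree r :=
  ⟨G.degree (Classical.choice hne), fun v => h v _⟩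

lemma one_le_degree_of_adj {a b : V} (hab : G.Adj a b) : 1 ≤ G.degree a := by
  have hb : b ∈ G.neighborFinset a := by
    rw [SimpleGraph.mem_neighborFinset]; exact hab
  have := Finset.card_pos.2 ⟨b, hb⟩
  rw [SimpleGraph.card_neighborFinset_eq_degree] at this; omega

lemma regular_of_card_two (hcard : Fintype.card V = 2) (hm : 1 ≤ G.edgeFinset.card) :
    ∃ r, G.IsRegularOfDegree r := by
  classical
  obtain ⟨e0, he0⟩ := Finset.card_pos.1 hm
  revert he0
  induction e0 using Sym2.ind with
  | _ a b =>
    intro he0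
    have hab : G.Adj a b := by
      simpa [SimpleGraph.mem_edgeFinset, SimpleGraph.mem_edgeSet] using he0
    refine ⟨1, fun v => ?_⟩
    have hle : G.degree v ≤ 1 := by
      have hsub : G.neighborFinset v ⊆ Finset.univ.erase v := by
        intro w hw
        rw [SimpleGraph.mem_neighborFinset] at hw
        exact Finset.mem_erase.2 ⟨hw.ne', Finset.mem_univ w⟩
      have := Finset.card_le_card hsub
      rw [Finset.card_erase_of_mem (Finset.mem_univ v), Finset.card_univ, hcard] at this
      simpa [SimpleGraph.card_neighborFinset_eq_degree] using this
    have hge : 1 ≤ G.degree v := by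
      have hvab : v = a ∨ v = b := by
        by_contra hcon
        push_neg at hcon
        have h3 : ({v, a, b} : Finset V).card = 3 := by
          rw [Finset.card_insert_of_notMem (by simp [hcon.1, hcon.2]),
            Finset.card_pair hab.ne]
        have h4 := Finset.card_le_univ ({v, a, b} : Finset V)
        rw [h3] at h4
        omega
      rcases hvab with rfl | rfl
      · exact one_le_degree_of_adj G hab
      · exact one_le_degree_of_adj G hab.symm
    omega
end Helpers

theorem stmt_18 (G : SimpleGraph V) [DecidableRel G.Adj]
    (hn : 1 ≤ Fintype.card V)
    (hm : 1 ≤ G.edgeFinset.card) :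
    (NK (Gmpm G) : ℝ) ≤ (((G.edgeFinset.card : ℝ) + Fintype.card V - 1) - 4 * G.edgeFinset.card / Fintype.card V) ^ Fintype.card V * (((Fintype.card V : ℝ) - 4) + (M1 G : ℝ) / G.edgeFinset.card) ^ G.edgeFinset.card ∧
      ((NK (Gmpm G) : ℝ) = (((G.edgeFinset.card : ℝ) + Fintype.card V - 1) - 4 * G.edgeFinset.card / Fintype.card V) ^ Fintype.card V * (((Fintype.card V : ℝ) - 4) + (M1 G : ℝ) / G.edgeFinset.card) ^ G.edgeFinset.card ↔ (∃ r, G.IsRegularOfDegree r)) := by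
  classical
  have hnV : Nonempty V := Fintype.card_pos_iff.1 hn
  have hnR : (0 : ℝ) < Fintype.card V := by exact_mod_cast hn
  have hmR : (0 : ℝ) < G.edgeFinset.card := by exact_mod_cast hm
  have hVnn : ∀ u ∈ Finset.univ, (0:ℝ) ≤ ((Gmpm G).degree (Sum.inl u) : ℝ) :=
    fun u _ => Nat.cast_nonneg _
  have hEnn : ∀ e ∈ G.edgeFinset, (0:ℝ) ≤ (Fintype.card V : ℝ) - 4 + degSum G e := by
    intro e he
    have he' : e ∈ G.edgeSet := SimpleGraph.mem_edgeFinset.1 he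
    calc (0:ℝ) ≤ ((Gmpm G).degree (Sum.inr ⟨e, he'⟩) : ℝ) := Nat.cast_nonneg _
      _ = _ := degree_inr_real G ⟨e, he'⟩
  -- sums
  have hd : ∑ u : V, (G.degree u : ℝ) = 2 * G.edgeFinset.card := by
    exact_mod_cast congrArg (Nat.cast (R := ℝ)) G.sum_degrees_eq_twice_card_edges
  have hsumV : ∑ u : V, ((Gmpm G).degree (Sum.inl u) : ℝ)
      = Fintype.card V * ((G.edgeFinset.card : ℝ) + Fintype.card V - 1)
        - 4 * G.edgeFinset.card := by
    have hh : ∑ u : V, ((Gmpm G).degree (Sum.inl u) : ℝ)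
        = ∑ u : V, ((G.edgeFinset.card : ℝ) + Fintype.card V - 1 - 2 * G.degree u) :=
      Finset.sum_congr rfl fun u _ => degree_inl_real G u
    rw [hh, Finset.sum_sub_distrib, Finset.sum_const, Finset.card_univ, nsmul_eq_mul,
      ← Finset.mul_sum, hd]
    ring
  have hAV : (∑ u : V, ((Gmpm G).degree (Sum.inl u) : ℝ)) / (Fintype.card V : ℝ)
      = ((G.edgeFinset.card : ℝ) + Fintype.card V - 1)
        - 4 * G.edgeFinset.card / Fintype.card V := by
    rw [hsumV, sub_div, mul_div_cancel_left₀ _ hnR.ne']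
  have hsumE : ∑ e ∈ G.edgeFinset, ((Fintype.card V : ℝ) - 4 + degSum G e)
      = G.edgeFinset.card * ((Fintype.card V : ℝ) - 4) + M1 G := by
    have hds : ∑ e ∈ G.edgeFinset, (degSum G e : ℝ) = (M1 G : ℝ) := by
      exact_mod_cast congrArg (Nat.cast (R := ℝ)) (sum_degSum G)
    rw [Finset.sum_add_distrib, Finset.sum_const, nsmul_eq_mul, hds]
  have hAE : (∑ e ∈ G.edgeFinset, ((Fintype.card V : ℝ) - 4 + degSum G e))
        / (G.edgeFinset.card : ℝ)
      = ((Fintype.card V : ℝ) - 4) + (M1 G : ℝ) / G.edgeFinset.card := by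
    rw [hsumE, add_div, mul_div_cancel_left₀ _ hmR.ne']
  have hAVnn : 0 ≤ (∑ u : V, ((Gmpm G).degree (Sum.inl u) : ℝ)) / (Fintype.card V : ℝ) :=
    div_nonneg (Finset.sum_nonneg hVnn) hnR.le
  have hAEnn : 0 ≤ (∑ e ∈ G.edgeFinset, ((Fintype.card V : ℝ) - 4 + degSum G e))
      / (G.edgeFinset.card : ℝ) :=
    div_nonneg (Finset.sum_nonneg hEnn) hmR.le
  -- AM-GM
  have hamV := amgm Finset.univ Finset.univ_nonempty
    (fun u => ((Gmpm G).degree (Sum.inl u) : ℝ)) hVnn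
  rw [Finset.card_univ] at hamV
  have hamE := amgm G.edgeFinset (Finset.card_pos.1 hm)
    (fun e => (Fintype.card V : ℝ) - 4 + degSum G e) hEnn
  have hP1nn : 0 ≤ ∏ u : V, ((Gmpm G).degree (Sum.inl u) : ℝ) := Finset.prod_nonneg hVnn
  have hP2nn : 0 ≤ ∏ e ∈ G.edgeFinset, ((Fintype.card V : ℝ) - 4 + degSum G e) :=
    Finset.prod_nonneg hEnn
  rw [NK_split G, ← hAV, ← hAE]
  refine ⟨mul_le_mul hamV.1 hamE.1 hP2nn (pow_nonneg hAVnn _), ?_, ?_⟩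
  · -- equality → regular
    intro heq
    by_cases hAE0 : (∑ e ∈ G.edgeFinset, ((Fintype.card V : ℝ) - 4 + degSum G e))
        / (G.edgeFinset.card : ℝ) = 0
    · -- degenerate: n = 2
      have hsum0 : ∑ e ∈ G.edgeFinset, ((Fintype.card V : ℝ) - 4 + degSum G e) = 0 := by
        rcases div_eq_zero_iff.1 hAE0 with h | h
        · exact h
        · exact absurd h hmR.ne'
      have hall := (Finset.sum_eq_zero_iff_of_nonneg hEnn).1 hsum0
      obtain ⟨e0, he0⟩ := Finset.card_pos.1 hm
      revert he0
      induction e0 using Sym2.ind with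
      | _ a b =>
        intro he0
        have hab : G.Adj a b := by
          simpa [SimpleGraph.mem_edgeFinset, SimpleGraph.mem_edgeSet] using he0
        have hfE0 := hall s(a, b) he0
        rw [degSum_mk] at hfE0
        have hnat : Fintype.card V + (G.degree a + G.degree b) = 4 := by
          have h5 : (Fintype.card V : ℝ) + ((G.degree a : ℝ) + G.degree b) = 4 := by
            push_cast at hfE0 ⊢
            linarith
          exact_mod_cast h5
        have hdega := one_le_degree_of_adj G hab
        have hdegb := one_le_degree_of_adj G hab.symm
        have hn2 : 2 ≤ Fintype.card V := by
          have : Nontrivial V := ⟨a, b, hab.ne⟩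
          exact Fintype.one_lt_card
        exact regular_of_card_two G (by omega) hm
    · have hAEpos : 0 < (∑ e ∈ G.edgeFinset, ((Fintype.card V : ℝ) - 4 + degSum G e))
          / (G.edgeFinset.card : ℝ) := hAEnn.lt_of_ne' hAE0
      by_cases hAV0 : (∑ u : V, ((Gmpm G).degree (Sum.inl u) : ℝ)) / (Fintype.card V : ℝ) = 0
      · have hsum0 : ∑ u : V, ((Gmpm G).degree (Sum.inl u) : ℝ) = 0 := by
          rcases div_eq_zero_iff.1 hAV0 with h | h
          · exact h
          · exact absurd h hnR.ne'
        have hall := (Finset.sum_eq_zero_iff_of_nonneg hVnn).1 hsum0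
        refine regular_of_degree_eq G hnV fun u v => ?_
        have hu := hall u (Finset.mem_univ u)
        have hv := hall v (Finset.mem_univ v)
        rw [degree_inl_real G] at hu hv
        have h6 : (G.degree u : ℝ) = G.degree v := by linarith
        exact_mod_cast h6
      · have hAVpos : 0 < (∑ u : V, ((Gmpm G).degree (Sum.inl u) : ℝ))
            / (Fintype.card V : ℝ) := hAVnn.lt_of_ne' hAV0
        have hchain : ((∑ u : V, ((Gmpm G).degree (Sum.inl u) : ℝ))
                / (Fintype.card V : ℝ)) ^ Fintype.card V
              * ((∑ e ∈ G.edgeFinset, ((Fintype.card V : ℝ) - 4 + degSum G e))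
                / (G.edgeFinset.card : ℝ)) ^ G.edgeFinset.card
            ≤ (∏ u : V, ((Gmpm G).degree (Sum.inl u) : ℝ))
              * ((∑ e ∈ G.edgeFinset, ((Fintype.card V : ℝ) - 4 + degSum G e))
                / (G.edgeFinset.card : ℝ)) ^ G.edgeFinset.card := by
          rw [← heq]
          exact mul_le_mul_of_nonneg_left hamE.1 hP1nn
        have hP1eq : (∏ u : V, ((Gmpm G).degree (Sum.inl u) : ℝ))
            = ((∑ u : V, ((Gmpm G).degree (Sum.inl u) : ℝ))
                / (Fintype.card V : ℝ)) ^ Fintype.card V :=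
          le_antisymm hamV.1 (le_of_mul_le_mul_right hchain (pow_pos hAEpos _))
        have hconst := hamV.2.1 hP1eq
        refine regular_of_degree_eq G hnV fun u v => ?_
        have hu := hconst u (Finset.mem_univ u)
        have hv := hconst v (Finset.mem_univ v)
        rw [degree_inl_real G] at hu hv
        have h6 : (G.degree u : ℝ) = G.degree v := by linarith
        exact_mod_cast h6
  · -- regular → equality
    rintro ⟨r, hreg⟩
    have hcV : ∀ u : V, ((Gmpm G).degree (Sum.inl u) : ℝ)
        = (G.edgeFinset.card : ℝ) + Fintype.card V - 1 - 2 * r := by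
      intro u
      rw [degree_inl_real G, hreg u]
    have hAVc : (∑ u : V, ((Gmpm G).degree (Sum.inl u) : ℝ)) / (Fintype.card V : ℝ)
        = (G.edgeFinset.card : ℝ) + Fintype.card V - 1 - 2 * r := by
      rw [Finset.sum_congr rfl fun u _ => hcV u, Finset.sum_const, Finset.card_univ,
        nsmul_eq_mul, mul_div_cancel_left₀ _ hnR.ne']
    have hP1eq := hamV.2.2 fun u _ => (hcV u).trans hAVc.symm
    have hdegSum : ∀ e : Sym2 V, (degSum G e : ℝ) = 2 * r := by
      intro e
      induction e using Sym2.ind with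
      | _ a b =>
        rw [degSum_mk, hreg a, hreg b]
        push_cast
        ring
    have hcE : ∀ e : Sym2 V, (Fintype.card V : ℝ) - 4 + degSum G e
        = (Fintype.card V : ℝ) - 4 + 2 * r := by
      intro e
      rw [hdegSum e]
    have hAEc : (∑ e ∈ G.edgeFinset, ((Fintype.card V : ℝ) - 4 + degSum G e))
          / (G.edgeFinset.card : ℝ)
        = (Fintype.card V : ℝ) - 4 + 2 * r := by
      rw [Finset.sum_congr rfl fun e _ => hcE e, Finset.sum_const, nsmul_eq_mul,
        mul_div_cancel_left₀ _ hmR.ne']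
    have hP2eq := hamE.2.2 fun e _ => (hcE e).trans hAEc.symm
    rw [hP1eq, hP2eq]
end
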